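/- Let G be a simple graph on {1,...,n}, t, p ∈ ℤⁿ with p ≤ d, and consider the [t,p]-system on G under any fair update schedule. Then the initial state d = (deg(1),...,deg(n)) reaches the stable state (C_{t,p}(1),...,C_{t,p}(n)) after finitely many update steps. -/

import Mathlib

open Finset

/-- A (padded) `[t,p]`-separate chain of the induced subgraph of `G` on the vertex set `A`:
an antitone sequence of vertex sets starting at `A` (padded with `∅` beyond its size) such
that every vertex `v` in the `i`-th member has at least `max {0, i + p v}` neighbors in the
`i`-th member and at least `i` neighbors in the `max {0, i + t v}`-th member. -/
def SepChainFrom {n : ℕ} (G : SimpleGraph (Fin n)) [DecidableRel G.Adj]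
    (t p : Fin n → ℤ) (A : Finset (Fin n)) (S : ℕ → Finset (Fin n)) : Prop :=
  S 0 = A ∧
  (∀ i, S (i + 1) ⊆ S i) ∧
  (∀ i, ∀ v ∈ S i,
    max 0 ((i : ℤ) + p v) ≤ (((S i).filter (G.Adj v)).card : ℤ) ∧
    (i : ℤ) ≤ (((S (((i : ℤ) + t v).toNat)).filter (G.Adj v)).card : ℤ))

/-- A `[t,p]`-separate chain of `G` itself. -/
def SepChain {n : ℕ} (G : SimpleGraph (Fin n)) [DecidableRel G.Adj]
    (t p : Fin n → ℤ) (S : ℕ → Finset (Fin n)) : Prop :=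
  SepChainFrom G t p Finset.univ S

open Classical in
/-- `rank G t p v = C_{t,p}(v)`, the largest `i` such that `v` belongs to the `i`-th member of
some (equivalently, of the maximal) `[t,p]`-separate chain of `G`. -/
noncomputable def rank {n : ℕ} (G : SimpleGraph (Fin n)) [DecidableRel G.Adj]
    (t p : Fin n → ℤ) (v : Fin n) : ℕ :=
  Nat.findGreatest (fun i => ∃ S : ℕ → Finset (Fin n), SepChain G t p S ∧ v ∈ S i) n

open Classical in
/-- The local update function of the `[t,p]`-system: `localF G t p x v` is the maximum
`k ∈ {0,…,n}` such that at least `k` neighbors of `v` have value `≥ k + t v` in `x` and at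
least `max {0, k + p v}` neighbors of `v` have value `≥ k` in `x`. -/
noncomputable def localF {n : ℕ} (G : SimpleGraph (Fin n)) [DecidableRel G.Adj]
    (t p : Fin n → ℤ) (x : Fin n → ℕ) (v : Fin n) : ℕ :=
  Nat.findGreatest (fun k =>
    (k : ℤ) ≤ ((Finset.univ.filter (fun u => G.Adj v u ∧ (k : ℤ) + t v ≤ (x u : ℤ))).card : ℤ) ∧
    max 0 ((k : ℤ) + p v) ≤
      ((Finset.univ.filter (fun u => G.Adj v u ∧ k ≤ x u)).card : ℤ)) n
open Classical Finset in
lemma localF_prop {n : ℕ} (G : SimpleGraph (Fin n)) [DecidableRel G.Adj]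
    (t p : Fin n → ℤ) (hp : ∀ v : Fin n, p v ≤ (G.degree v : ℤ)) (x : Fin n → ℕ) (v : Fin n) :
    ((localF G t p x v : ℤ) ≤
      ((Finset.univ.filter (fun u => G.Adj v u ∧ (localF G t p x v : ℤ) + t v ≤ (x u : ℤ))).card : ℤ)) ∧
    max 0 ((localF G t p x v : ℤ) + p v) ≤
      ((Finset.univ.filter (fun u => G.Adj v u ∧ localF G t p x v ≤ x u)).card : ℤ) := by
  have h0 : ((0:ℕ) : ℤ) ≤ ((Finset.univ.filter (fun u => G.Adj v u ∧ ((0:ℕ) : ℤ) + t v ≤ (x u : ℤ))).card : ℤ) ∧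
      max 0 (((0:ℕ):ℤ) + p v) ≤ ((Finset.univ.filter (fun u => G.Adj v u ∧ (0:ℕ) ≤ x u)).card : ℤ) := by
    constructor
    · positivity
    · have : (Finset.univ.filter (fun u => G.Adj v u ∧ (0:ℕ) ≤ x u)) = G.neighborFinset v := by
        ext u; simp [SimpleGraph.mem_neighborFinset]
      rw [this, SimpleGraph.card_neighborFinset_eq_degree]
      have := hp v
      omega
  exact Nat.findGreatest_spec (P := fun k => (k : ℤ) ≤ ((Finset.univ.filter (fun u => G.Adj v u ∧ (k : ℤ) + t v ≤ (x u : ℤ))).card : ℤ) ∧ max 0 ((k : ℤ) + p v) ≤ ((Finset.univ.filter (fun u => G.Adj v u ∧ k ≤ x u)).card : ℤ)) (Nat.zero_le n) h0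
open Classical Finset in
lemma localF_le_card {n : ℕ} (G : SimpleGraph (Fin n)) [DecidableRel G.Adj]
    (t p : Fin n → ℤ) (x : Fin n → ℕ) (v : Fin n) : localF G t p x v ≤ n :=
  Nat.findGreatest_le n

open Classical Finset in
lemma filter_adj_card_le {n : ℕ} (G : SimpleGraph (Fin n)) [DecidableRel G.Adj]
    (v : Fin n) (A : Finset (Fin n)) : (A.filter (G.Adj v)).card ≤ G.degree v := by
  rw [← SimpleGraph.card_neighborFinset_eq_degree]
  apply Finset.card_le_card
  intro u hu
  simp only [Finset.mem_filter] at hu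
  simp [SimpleGraph.mem_neighborFinset, hu.2]

open Classical Finset in
lemma localF_le_degree {n : ℕ} (G : SimpleGraph (Fin n)) [DecidableRel G.Adj]
    (t p : Fin n → ℤ) (hp : ∀ v : Fin n, p v ≤ (G.degree v : ℤ)) (x : Fin n → ℕ) (v : Fin n) :
    localF G t p x v ≤ G.degree v := by
  have h1 := (localF_prop G t p hp x v).1
  have h2 : (Finset.univ.filter (fun u => G.Adj v u ∧ (localF G t p x v : ℤ) + t v ≤ (x u : ℤ))).card
      ≤ G.degree v := by
    refine le_trans (Finset.card_le_card ?_) (filter_adj_card_le G v Finset.univ)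
    intro u hu
    simp only [Finset.mem_filter] at hu ⊢
    exact ⟨hu.1, hu.2.1⟩
  omega

open Classical Finset in
lemma localF_mono {n : ℕ} (G : SimpleGraph (Fin n)) [DecidableRel G.Adj]
    (t p : Fin n → ℤ) (x y : Fin n → ℕ) (h : ∀ u, x u ≤ y u) (v : Fin n) :
    localF G t p x v ≤ localF G t p y v := by
  unfold localF
  apply Nat.findGreatest_mono_left
  intro k hk
  constructor
  · refine le_trans hk.1 ?_
    have hs : (Finset.univ.filter (fun u => G.Adj v u ∧ (k : ℤ) + t v ≤ (x u : ℤ)))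
        ⊆ (Finset.univ.filter (fun u => G.Adj v u ∧ (k : ℤ) + t v ≤ (y u : ℤ))) := by
      intro u hu
      simp only [Finset.mem_filter, Finset.mem_univ, true_and] at hu ⊢
      exact ⟨hu.1, le_trans hu.2 (by exact_mod_cast h u)⟩
    exact_mod_cast Finset.card_le_card hs
  · refine le_trans hk.2 ?_
    have hs : (Finset.univ.filter (fun u => G.Adj v u ∧ k ≤ x u))
        ⊆ (Finset.univ.filter (fun u => G.Adj v u ∧ k ≤ y u)) := by
      intro u hu
      simp only [Finset.mem_filter, Finset.mem_univ, true_and] at hu ⊢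
      exact ⟨hu.1, le_trans hu.2 (h u)⟩
    exact_mod_cast Finset.card_le_card hs
open Classical Finset in
lemma chain_mem_le {n : ℕ} (G : SimpleGraph (Fin n)) [DecidableRel G.Adj]
    (t p : Fin n → ℤ) (S : ℕ → Finset (Fin n)) (hS : SepChain G t p S)
    {i : ℕ} {v : Fin n} (hv : v ∈ S i) : i ≤ n := by
  have h := (hS.2.2 i v hv).2
  have hc : ((S (((i : ℤ) + t v).toNat)).filter (G.Adj v)).card ≤ n := by
    refine le_trans (Finset.card_le_card (Finset.filter_subset _ _)) ?_
    refine le_trans (Finset.card_le_univ _) ?_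
    simp
  omega

open Classical Finset in
lemma chain_le_rank {n : ℕ} (G : SimpleGraph (Fin n)) [DecidableRel G.Adj]
    (t p : Fin n → ℤ) (S : ℕ → Finset (Fin n)) (hS : SepChain G t p S)
    {i : ℕ} {v : Fin n} (hv : v ∈ S i) : i ≤ rank G t p v :=
  Nat.le_findGreatest (chain_mem_le G t p S hS hv) ⟨S, hS, hv⟩

open Classical Finset in
lemma rank_witness {n : ℕ} (G : SimpleGraph (Fin n)) [DecidableRel G.Adj]
    (t p : Fin n → ℤ) (hp : ∀ v : Fin n, p v ≤ (G.degree v : ℤ)) (v : Fin n) :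
    ∃ S : ℕ → Finset (Fin n), SepChain G t p S ∧ v ∈ S (rank G t p v) := by
  have h0 : ∃ S : ℕ → Finset (Fin n), SepChain G t p S ∧ v ∈ S 0 := by
    refine ⟨fun i => if i = 0 then Finset.univ else ∅, ⟨rfl, ?_, ?_⟩, by simp⟩
    · intro i u hu; simp at hu
    · intro i w hw
      rcases Nat.eq_zero_or_pos i with rfl | hi
      · simp only [if_pos] at hw ⊢
        constructor
        · have hfe : (Finset.univ.filter (G.Adj w)) = G.neighborFinset w := by
            ext u; simp [SimpleGraph.mem_neighborFinset]
          rw [hfe, SimpleGraph.card_neighborFinset_eq_degree]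
          have := hp w
          simp only [Nat.cast_zero, zero_add]
          omega
        · simp
      · simp only [if_neg (Nat.pos_iff_ne_zero.mp hi)] at hw
        exact absurd hw (Finset.notMem_empty w)
  exact Nat.findGreatest_spec (P := fun i => ∃ S : ℕ → Finset (Fin n), SepChain G t p S ∧ v ∈ S i)
    (Nat.zero_le n) h0

open Classical Finset in
lemma rank_le_degree {n : ℕ} (G : SimpleGraph (Fin n)) [DecidableRel G.Adj]
    (t p : Fin n → ℤ) (hp : ∀ v : Fin n, p v ≤ (G.degree v : ℤ)) (v : Fin n) :
    rank G t p v ≤ G.degree v := by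
  obtain ⟨S, hS, hv⟩ := rank_witness G t p hp v
  have h := (hS.2.2 _ v hv).2
  have hc := filter_adj_card_le G v (S (((rank G t p v : ℤ) + t v).toNat))
  omega
open Classical Finset in
lemma rank_le_localF {n : ℕ} (G : SimpleGraph (Fin n)) [DecidableRel G.Adj]
    (t p : Fin n → ℤ) (hp : ∀ v : Fin n, p v ≤ (G.degree v : ℤ)) (x : Fin n → ℕ)
    (hx : ∀ u, rank G t p u ≤ x u) (v : Fin n) :
    rank G t p v ≤ localF G t p x v := by
  obtain ⟨S, hS, hv⟩ := rank_witness G t p hp v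
  set r := rank G t p v with hr
  obtain ⟨hc1, hc2⟩ := hS.2.2 r v hv
  unfold localF
  refine Nat.le_findGreatest (Nat.findGreatest_le n) ⟨?_, ?_⟩
  · refine le_trans hc2 ?_
    have hs : (S (((r:ℤ) + t v).toNat)).filter (G.Adj v) ⊆
        Finset.univ.filter (fun u => G.Adj v u ∧ (r : ℤ) + t v ≤ (x u : ℤ)) := by
      intro u hu
      simp only [Finset.mem_filter, Finset.mem_univ, true_and] at hu ⊢
      refine ⟨hu.2, ?_⟩
      have h1 : (((r:ℤ) + t v).toNat) ≤ rank G t p u := chain_le_rank G t p S hS hu.1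
      have h2 := hx u
      have h3 : ((r:ℤ) + t v) ≤ ((((r:ℤ) + t v).toNat : ℕ) : ℤ) := Int.self_le_toNat _
      omega
    exact_mod_cast Finset.card_le_card hs
  · refine le_trans hc1 ?_
    have hs : (S r).filter (G.Adj v) ⊆
        Finset.univ.filter (fun u => G.Adj v u ∧ r ≤ x u) := by
      intro u hu
      simp only [Finset.mem_filter, Finset.mem_univ, true_and] at hu ⊢
      exact ⟨hu.2, le_trans (chain_le_rank G t p S hS hu.1) (hx u)⟩
    exact_mod_cast Finset.card_le_card hs

open Classical Finset in
lemma fixed_le_rank {n : ℕ} (G : SimpleGraph (Fin n)) [DecidableRel G.Adj]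
    (t p : Fin n → ℤ) (hp : ∀ v : Fin n, p v ≤ (G.degree v : ℤ)) (z : Fin n → ℕ)
    (hz : ∀ v, localF G t p z v = z v) (v : Fin n) : z v ≤ rank G t p v := by
  set S : ℕ → Finset (Fin n) := fun i => Finset.univ.filter (fun u => i ≤ z u) with hSdef
  have hchain : SepChain G t p S := by
    refine ⟨by simp [hSdef], ?_, ?_⟩
    · intro i u hu
      simp only [hSdef, Finset.mem_filter, Finset.mem_univ, true_and] at hu ⊢
      omega
    · intro i w hw
      simp only [hSdef, Finset.mem_filter, Finset.mem_univ, true_and] at hw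
      have hPz := localF_prop G t p hp z w
      rw [hz w] at hPz
      constructor
      · have hsub : Finset.univ.filter (fun u => G.Adj w u ∧ z w ≤ z u)
            ⊆ (S i).filter (G.Adj w) := by
          intro u hu
          simp only [hSdef, Finset.mem_filter, Finset.mem_univ, true_and] at hu ⊢
          exact ⟨le_trans hw hu.2, hu.1⟩
        calc max 0 ((i:ℤ) + p w) ≤ max 0 ((z w:ℤ) + p w) :=
              max_le_max le_rfl (add_le_add_left (by exact_mod_cast hw) _)
          _ ≤ ((Finset.univ.filter (fun u => G.Adj w u ∧ z w ≤ z u)).card : ℤ) := hPz.2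
          _ ≤ (((S i).filter (G.Adj w)).card : ℤ) := by
              exact_mod_cast Finset.card_le_card hsub
      · have hsub : Finset.univ.filter (fun u => G.Adj w u ∧ (z w : ℤ) + t w ≤ (z u : ℤ))
            ⊆ (S (((i:ℤ) + t w).toNat)).filter (G.Adj w) := by
          intro u hu
          simp only [hSdef, Finset.mem_filter, Finset.mem_univ, true_and] at hu ⊢
          refine ⟨?_, hu.1⟩
          have h1 := hu.2
          have h2 : (i : ℤ) ≤ (z w : ℤ) := by exact_mod_cast hw
          rw [← Int.toNat_le] at *
          omega
        calc (i : ℤ) ≤ (z w : ℤ) := by exact_mod_cast hw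
          _ ≤ ((Finset.univ.filter (fun u => G.Adj w u ∧ (z w : ℤ) + t w ≤ (z u : ℤ))).card : ℤ) := hPz.1
          _ ≤ (((S (((i:ℤ) + t w).toNat)).filter (G.Adj w)).card : ℤ) := by
              exact_mod_cast Finset.card_le_card hsub
  have hzn : z v ≤ n := by rw [← hz v]; exact Nat.findGreatest_le n
  have hvS : v ∈ S (z v) := by simp [hSdef]
  exact Nat.le_findGreatest hzn ⟨S, hchain, hvS⟩

/-- Under any fair update schedule, the `[t,p]`-system on `G` started from
the degree sequence reaches the stable state `(C_{t,p}(1),…,C_{t,p}(n))` in finitely many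
steps. -/
theorem degree_reaches_rank {n : ℕ} (G : SimpleGraph (Fin n)) [DecidableRel G.Adj]
    (t p : Fin n → ℤ) (hp : ∀ v : Fin n, p v ≤ (G.degree v : ℤ))
    (W : ℕ → Finset (Fin n)) (hfair : ∀ v : Fin n, ∀ k : ℕ, ∃ l, k < l ∧ v ∈ W l)
    (x : ℕ → Fin n → ℕ) (hx0 : ∀ v, x 0 v = G.degree v)
    (hstep : ∀ j v, x (j + 1) v = if v ∈ W (j + 1) then localF G t p (x j) v else x j v) :
    ∃ k : ℕ, ∀ j, k ≤ j → ∀ v : Fin n, x j v = rank G t p v := by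
  classical
  have hloc : ∀ j v, localF G t p (x j) v ≤ x j v := by
    intro j
    induction j with
    | zero => intro v; rw [hx0 v]; exact localF_le_degree G t p hp (x 0) v
    | succ j ih =>
      have hle : ∀ u, x (j + 1) u ≤ x j u := by
        intro u; rw [hstep j u]; split
        · exact ih u
        · exact le_refl _
      intro v
      calc localF G t p (x (j + 1)) v ≤ localF G t p (x j) v := localF_mono G t p _ _ hle v
        _ ≤ x (j + 1) v := by
            rw [hstep j v]; split
            · exact le_refl _
            · exact ih v
  have hdec : ∀ j u, x (j + 1) u ≤ x j u := by
    intro j u; rw [hstep j u]; split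
    · exact hloc j u
    · exact le_refl _
  have hmono : ∀ j j', j ≤ j' → ∀ u, x j' u ≤ x j u := by
    intro j j' h
    induction j', h using Nat.le_induction with
    | base => intro u; exact le_refl _
    | succ j' hj ih => intro u; exact le_trans (hdec j' u) (ih u)
  have hrle : ∀ j u, rank G t p u ≤ x j u := by
    intro j
    induction j with
    | zero => intro u; rw [hx0 u]; exact rank_le_degree G t p hp u
    | succ j ih =>
      intro u; rw [hstep j u]; split
      · exact rank_le_localF G t p hp (x j) ih u
      · exact ih u
  set f : ℕ → ℕ := fun j => ∑ u : Fin n, x j u with hf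
  have hrange : (Set.range f).Nonempty := ⟨f 0, 0, rfl⟩
  obtain ⟨k, hk⟩ := Nat.sInf_mem hrange
  have hconst : ∀ j, k ≤ j → ∀ u, x j u = x k u := by
    intro j hj
    have hfge : f k ≤ f j := hk ▸ Nat.sInf_le ⟨j, rfl⟩
    by_contra hcon
    push_neg at hcon
    obtain ⟨u, hu⟩ := hcon
    have hlt : x j u < x k u := lt_of_le_of_ne (hmono k j hj u) hu
    have hflt : f j < f k :=
      Finset.sum_lt_sum (fun u _ => hmono k j hj u) ⟨u, Finset.mem_univ u, hlt⟩
    omega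
  have hfix : ∀ v, localF G t p (x k) v = x k v := by
    intro v
    obtain ⟨l, hkl, hvW⟩ := hfair v k
    obtain ⟨m, rfl⟩ : ∃ m, l = m + 1 := ⟨l - 1, by omega⟩
    have hxm : x m = x k := funext (hconst m (by omega))
    have hthis := hstep m v
    rw [if_pos hvW, hxm] at hthis
    rw [← hthis]
    exact hconst (m + 1) (by omega) v
  refine ⟨k, fun j hj v => ?_⟩
  rw [hconst j hj v]
  exact le_antisymm (fixed_le_rank G t p hp (x k) hfix v) (hrle k v)
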